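/- Let α, β be irrational numbers with convergent denominators q_n, t_s, complete quotients α_r, β_r, and put ξ_n = ‖q_n α‖, η_s = ‖t_s β‖. If η_s ∈ (ξ_n, ξ_{n−1}), then either 1/η_s − 1/ξ_{n−1} ≥ t_s(β_{s+1} + t_{s−1}/t_s)(1 − 1/√(α_{n+1})), or 1/ξ_n − 1/η_s ≥ q_n(α_{n+1} + q_{n−1}/q_n)(1 − 1/√(α_{n+1})). -/

import Mathlib

/-- Distance from a real number to the nearest integer. -/
noncomputable def dnint (x : ℝ) : ℝ := |x - round x|

/-- Numerators of the convergents, defined from the partial quotients. -/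
def cfP (a : ℕ → ℤ) : ℕ → ℤ
  | 0 => a 0
  | 1 => a 1 * a 0 + 1
  | (k + 2) => a (k + 2) * cfP a (k + 1) + cfP a k

lemma round_eq_of_abs_sub_lt {x : ℝ} {m : ℤ} (h : |x - (m : ℝ)| < 1 / 2) :
    round x = m := by
  rw [abs_lt] at h
  rw [round_eq]
  apply Int.floor_eq_iff.mpr
  constructor
  · linarith [h.1, h.2]
  · linarith [h.1, h.2]

/-- Key continued-fraction facts. -/
theorem cfKey (α : ℝ) (hα : Irrational α) (tl : ℕ → ℝ) (a : ℕ → ℤ) (q : ℕ → ℤ)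
    (h0 : tl 0 = α)
    (htl : ∀ r, tl (r + 1) = (tl r - (⌊tl r⌋ : ℝ))⁻¹)
    (ha : ∀ r, a r = ⌊tl r⌋)
    (hq0 : q 0 = 1) (hq1 : q 1 = a 1)
    (hqrec : ∀ k, q (k + 2) = a (k + 2) * q (k + 1) + q k) :
    (∀ k, 0 < dnint ((q (k + 1) : ℝ) * α)) ∧
    (∀ k, (dnint ((q (k + 1) : ℝ) * α))⁻¹ = tl (k + 2) * (q (k + 1) : ℝ) + (q k : ℝ)) ∧
    (∀ k, (dnint ((q (k + 2) : ℝ) * α))⁻¹ = tl (k + 3) * (dnint ((q (k + 1) : ℝ) * α))⁻¹) ∧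
    (∀ k, (1 : ℝ) ≤ (q k : ℝ)) ∧
    (∀ r, 1 < tl (r + 1)) ∧
    (∀ r, tl (r + 1) = (a (r + 1) : ℝ) + (tl (r + 2))⁻¹) := by
  -- irrationality of all tails
  have hirr : ∀ r, Irrational (tl r) := by
    intro r
    induction r with
    | zero => rwa [h0]
    | succ r ih => rw [htl r]; exact (ih.sub_intCast _).inv
  have hfrac : ∀ r, 0 < tl r - (⌊tl r⌋ : ℝ) ∧ tl r - (⌊tl r⌋ : ℝ) < 1 := by
    intro r
    constructor
    · have h1 : (⌊tl r⌋ : ℝ) ≤ tl r := Int.floor_le _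
      have h2 : tl r ≠ (⌊tl r⌋ : ℝ) := (hirr r).ne_int _
      have := lt_of_le_of_ne h1 (fun h => h2 h.symm)
      linarith
    · linarith [Int.lt_floor_add_one (tl r)]
  have htl1 : ∀ r, 1 < tl (r + 1) := by
    intro r
    rw [htl r]
    have h := hfrac r
    rw [show (1 : ℝ) = 1⁻¹ by norm_num]
    exact inv_strictAnti₀ h.1 h.2
  have htlpos : ∀ r, 0 < tl (r + 1) := fun r => lt_trans one_pos (htl1 r)
  have htlne : ∀ r, tl (r + 1) ≠ 0 := fun r => ne_of_gt (htlpos r)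
  have hrel : ∀ r, tl (r + 1) = (a (r + 1) : ℝ) + (tl (r + 2))⁻¹ := by
    intro r
    rw [htl (r + 1), inv_inv, ha (r + 1)]
    ring
  have haZ : ∀ r, (1 : ℤ) ≤ a (r + 1) := by
    intro r
    rw [ha (r + 1)]
    exact Int.le_floor.mpr (by exact_mod_cast le_of_lt (htl1 r))
  have hqZ : ∀ k, (1 : ℤ) ≤ q k ∧ (1 : ℤ) ≤ q (k + 1) := by
    intro k
    induction k with
    | zero =>
      refine ⟨by rw [hq0], ?_⟩
      rw [hq1]; exact haZ 0
    | succ k ih =>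
      refine ⟨ih.2, ?_⟩
      rw [hqrec k]
      nlinarith [haZ (k + 1), ih.1, ih.2]
  have hqR : ∀ k, (1 : ℝ) ≤ (q k : ℝ) := fun k => by exact_mod_cast (hqZ k).1
  -- the error sequence
  set e : ℕ → ℝ := fun k => (q k : ℝ) * α - (cfP a k : ℝ) with he
  have he0 : e 0 = (tl 1)⁻¹ := by
    show (q 0 : ℝ) * α - (cfP a 0 : ℝ) = (tl 1)⁻¹
    rw [show cfP a 0 = a 0 from rfl, ha 0, hq0, htl 0, inv_inv, h0]
    push_cast; ring
  have hinv1 : (tl 1)⁻¹ = α - (a 0 : ℝ) := by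
    rw [htl 0, inv_inv, ha 0, h0]
  have herec : ∀ k, e (k + 1) = -e k / tl (k + 2) := by
    intro k
    induction k with
    | zero =>
      show (q 1 : ℝ) * α - (cfP a 1 : ℝ) = -((q 0 : ℝ) * α - (cfP a 0 : ℝ)) / tl 2
      rw [hq0, hq1, show cfP a 1 = a 1 * a 0 + 1 from rfl, show cfP a 0 = a 0 from rfl]
      have hαeq : α = (a 0 : ℝ) + (tl 1)⁻¹ := by rw [hinv1]; ring
      have ha1eq : (a 1 : ℝ) = tl 1 - (tl 2)⁻¹ := by rw [hrel 0]; ring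
      have key : (a 1 : ℝ) * (tl 1)⁻¹ - 1 = -(tl 1)⁻¹ / tl 2 := by
        rw [ha1eq]
        field_simp [htlne 0, htlne 1]
        ring
      rw [hαeq]
      push_cast
      linear_combination key
    | succ k ih =>
      have hstep : e (k + 2) = (a (k + 2) : ℝ) * e (k + 1) + e k := by
        show (q (k + 2) : ℝ) * α - (cfP a (k + 2) : ℝ) = _
        rw [hqrec k, show cfP a (k + 2) = a (k + 2) * cfP a (k + 1) + cfP a k from rfl]
        push_cast
        ring
      have hek0 : e (k + 1) * tl (k + 2) = -e k := by
        rw [ih]; exact div_mul_cancel₀ _ (htlne (k + 1))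
      have hek : e k = -(e (k + 1) * tl (k + 2)) := by linarith
      have hrel' : tl (k + 2) = (a (k + 2) : ℝ) + (tl (k + 3))⁻¹ := hrel (k + 1)
      rw [hstep, hek, hrel']
      field_simp [htlne (k + 2)]
      ring
  have hene : ∀ k, e k ≠ 0 := by
    intro k
    induction k with
    | zero => rw [he0]; exact inv_ne_zero (htlne 0)
    | succ k ih =>
      rw [herec k]
      exact div_ne_zero (neg_ne_zero.mpr ih) (htlne (k + 1))
  have habs : ∀ k, |e (k + 1)| = |e k| / tl (k + 2) := by
    intro k
    rw [herec k, abs_div, abs_neg, abs_of_pos (htlpos (k + 1))]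
  have hG : ∀ k, |e (k + 1)|⁻¹ = tl (k + 2) * (q (k + 1) : ℝ) + (q k : ℝ) := by
    intro k
    induction k with
    | zero =>
      have h1 : |e 0| = (tl 1)⁻¹ := by
        rw [he0, abs_of_pos (inv_pos.mpr (htlpos 0))]
      rw [habs 0, h1, hq0, hq1]
      rw [div_eq_mul_inv, mul_inv, inv_inv, inv_inv]
      rw [hrel 0]
      push_cast
      field_simp [htlne 1]
    | succ k ih =>
      rw [habs (k + 1), div_eq_mul_inv, mul_inv, inv_inv, ih]
      rw [hrel (k + 1), hqrec k]
      push_cast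
      field_simp [htlne (k + 2)]
      ring
  have habspos : ∀ k, 0 < |e k| := fun k => abs_pos.mpr (hene k)
  have hsmall : ∀ k, |e (k + 1)| < 1 / 2 := by
    intro k
    have h2 : 2 < |e (k + 1)|⁻¹ := by
      rw [hG k]
      nlinarith [htl1 (k + 1), hqR (k + 1), hqR k]
    have hy := habspos (k + 1)
    have h3 : |e (k + 1)| * |e (k + 1)|⁻¹ = 1 := mul_inv_cancel₀ (ne_of_gt hy)
    nlinarith [mul_lt_mul_of_pos_left h2 hy]
  have hdn : ∀ k, dnint ((q (k + 1) : ℝ) * α) = |e (k + 1)| := by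
    intro k
    have hr : round ((q (k + 1) : ℝ) * α) = cfP a (k + 1) :=
      round_eq_of_abs_sub_lt (hsmall k)
    rw [dnint, hr]
  refine ⟨?_, ?_, ?_, hqR, htl1, hrel⟩
  · intro k; rw [hdn k]; exact habspos (k + 1)
  · intro k; rw [hdn k]; exact hG k
  · intro k
    rw [hdn k, hdn (k + 1), habs (k + 1)]
    rw [div_eq_mul_inv, mul_inv, inv_inv]
    ring

theorem stmt_7 (α β : ℝ) (hα : Irrational α) (hβ : Irrational β)
    (tlα : ℕ → ℝ) (aα : ℕ → ℤ) (q : ℕ → ℤ)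
    (htlα0 : tlα 0 = α)
    (htlα : ∀ r, tlα (r + 1) = (tlα r - (⌊tlα r⌋ : ℝ))⁻¹)
    (haα : ∀ r, aα r = ⌊tlα r⌋)
    (hq0 : q 0 = 1) (hq1 : q 1 = aα 1)
    (hqrec : ∀ k, q (k + 2) = aα (k + 2) * q (k + 1) + q k)
    (tlβ : ℕ → ℝ) (aβ : ℕ → ℤ) (t : ℕ → ℤ)
    (htlβ0 : tlβ 0 = β)
    (htlβ : ∀ r, tlβ (r + 1) = (tlβ r - (⌊tlβ r⌋ : ℝ))⁻¹)
    (haβ : ∀ r, aβ r = ⌊tlβ r⌋)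
    (ht0 : t 0 = 1) (ht1 : t 1 = aβ 1)
    (htrec : ∀ k, t (k + 2) = aβ (k + 2) * t (k + 1) + t k)
    (n s : ℕ)
    (hlow : dnint ((q (n + 1) : ℝ) * α) < dnint ((t (s + 1) : ℝ) * β))
    (hhigh : dnint ((t (s + 1) : ℝ) * β) < dnint ((q n : ℝ) * α)) :
    1 / dnint ((t (s + 1) : ℝ) * β) - 1 / dnint ((q n : ℝ) * α) ≥
      (t (s + 1) : ℝ) * (tlβ (s + 2) + (t s : ℝ) / (t (s + 1) : ℝ)) *
        (1 - 1 / Real.sqrt (tlα (n + 2))) ∨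
    1 / dnint ((q (n + 1) : ℝ) * α) - 1 / dnint ((t (s + 1) : ℝ) * β) ≥
      (q (n + 1) : ℝ) * (tlα (n + 2) + (q n : ℝ) / (q (n + 1) : ℝ)) *
        (1 - 1 / Real.sqrt (tlα (n + 2))) := by
  obtain ⟨hposα, hidα, hratα, hqRα, htl1α, hrelα⟩ :=
    cfKey α hα tlα aα q htlα0 htlα haα hq0 hq1 hqrec
  obtain ⟨hposβ, hidβ, _, htRβ, _, _⟩ :=
    cfKey β hβ tlβ aβ t htlβ0 htlβ haβ ht0 ht1 htrec
  set ξA := dnint ((q (n + 1) : ℝ) * α) with hξA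
  set ξB := dnint ((q n : ℝ) * α) with hξB
  set η := dnint ((t (s + 1) : ℝ) * β) with hη
  have hξApos : 0 < ξA := hposα n
  have hηpos : 0 < η := hposβ s
  have hξBpos : 0 < ξB := lt_trans hηpos hhigh
  set A := ξA⁻¹ with hA
  set B := ξB⁻¹ with hB
  set C := η⁻¹ with hC
  have hApos : 0 < A := inv_pos.mpr hξApos
  have hBpos : 0 < B := inv_pos.mpr hξBpos
  have hCpos : 0 < C := inv_pos.mpr hηpos
  have hCA : C < A := inv_strictAnti₀ hξApos hlow
  have hBC : B < C := inv_strictAnti₀ hηpos hhigh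
  set α₂ := tlα (n + 2) with hα₂
  have hα₂gt : 1 < α₂ := htl1α (n + 1)
  have hα₂pos : 0 < α₂ := lt_trans one_pos hα₂gt
  -- key relation A = α₂ * B
  have hAB : A = α₂ * B := by
    cases n with
    | succ m => exact hratα m
    | zero =>
      -- ξB = dnint α
      have hq0R : (q 0 : ℝ) = 1 := by exact_mod_cast hq0
      have hBα : ξB = dnint α := by rw [hξB, hq0R, one_mul]
      have hfr : (0 : ℝ) < α - (⌊α⌋ : ℝ) ∧ α - (⌊α⌋ : ℝ) < 1 := by
        constructor
        · have h1 : (⌊α⌋ : ℝ) ≤ α := Int.floor_le _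
          have h2 : α ≠ (⌊α⌋ : ℝ) := hα.ne_int _
          have := lt_of_le_of_ne h1 (fun h => h2 h.symm)
          linarith
        · linarith [Int.lt_floor_add_one α]
      have htl1eq : tlα 1 = (α - (⌊α⌋ : ℝ))⁻¹ := by rw [htlα 0, htlα0]
      rcases lt_trichotomy (α - (⌊α⌋ : ℝ)) (1 / 2) with hlt | heq | hgt
      · -- good case: dnint α = α - ⌊α⌋
        have hround : round α = ⌊α⌋ := by
          apply round_eq_of_abs_sub_lt
          rw [abs_of_pos hfr.1]; exact hlt
        have hdα : dnint α = α - (⌊α⌋ : ℝ) := by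
          rw [dnint, hround, abs_of_pos hfr.1]
        have hBeq : B = tlα 1 := by
          rw [hB, hBα, hdα, htl1eq]
        have hAeq : A = tlα 2 * (q 1 : ℝ) + (q 0 : ℝ) := hidα 0
        have hrel0 : tlα 1 = (aα 1 : ℝ) + (tlα 2)⁻¹ := hrelα 0
        have hq1R : (q 1 : ℝ) = (aα 1 : ℝ) := by exact_mod_cast hq1
        have h2ne : tlα 2 ≠ 0 := ne_of_gt (lt_trans one_pos (htl1α 1))
        rw [hAeq, hBeq, hrel0, hq1R, hq0R]
        show tlα 2 * (aα 1 : ℝ) + 1 = tlα 2 * ((aα 1 : ℝ) + (tlα 2)⁻¹)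
        field_simp
      · -- fract = 1/2 contradicts irrationality
        exfalso
        apply hα
        exact ⟨(⌊α⌋ : ℚ) + 1 / 2, by push_cast; linarith⟩
      · -- fract > 1/2 : then a₁ = 1 = q₁, contradiction with hlow < hhigh
        exfalso
        have h1 : 1 < tlα 1 := htl1α 0
        have h2 : tlα 1 < 2 := by
          rw [htl1eq]
          rw [show (2 : ℝ) = (1 / 2 : ℝ)⁻¹ by norm_num]
          exact inv_strictAnti₀ (by norm_num) hgt
        have ha1 : aα 1 = 1 := by
          rw [haα 1]
          apply Int.floor_eq_iff.mpr
          constructor <;> push_cast <;> linarith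
        have hq1' : q 1 = 1 := by rw [hq1, ha1]
        have hne : ξA = ξB := by
          rw [hξA, hξB]
          norm_num [hq1', hq0]
        rw [hne] at hlow
        exact lt_irrefl _ (hlow.trans hhigh)
  -- rewrite goal right-hand sides
  have htsne : (t (s + 1) : ℝ) ≠ 0 := by
    have := htRβ (s + 1); linarith
  have hqnne : (q (n + 1) : ℝ) ≠ 0 := by
    have := hqRα (n + 1); linarith
  have hCfact : (t (s + 1) : ℝ) * (tlβ (s + 2) + (t s : ℝ) / (t (s + 1) : ℝ)) = C := by
    rw [hC, hidβ s]
    field_simp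
  have hAfact : (q (n + 1) : ℝ) * (tlα (n + 2) + (q n : ℝ) / (q (n + 1) : ℝ)) = A := by
    rw [hA, hidα n]
    field_simp
  set s0 := Real.sqrt α₂ with hs0
  have hs0gt : 1 < s0 := by
    rw [hs0, show (1 : ℝ) = Real.sqrt 1 by simp]
    exact Real.sqrt_lt_sqrt (by norm_num) hα₂gt
  have hs0pos : 0 < s0 := lt_trans one_pos hs0gt
  have hs0sq : s0 * s0 = α₂ := Real.mul_self_sqrt (le_of_lt hα₂pos)
  by_contra hcon
  push_neg at hcon
  obtain ⟨h1, h2⟩ := hcon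
  rw [hCfact] at h1
  rw [hAfact] at h2
  rw [one_div, one_div, ← hC, ← hB] at h1
  rw [one_div, one_div, ← hA, ← hC] at h2
  -- h1 : C - B < C * (1 - 1/s0), h2 : A - C < A * (1 - 1/s0)
  have hi1 : C / s0 < B := by
    have : C * (1 - 1 / s0) = C - C / s0 := by field_simp
    rw [this] at h1
    linarith
  have hi2 : A / s0 < C := by
    have : A * (1 - 1 / s0) = A - A / s0 := by field_simp
    rw [this] at h2
    linarith
  have hi1' : C < B * s0 := (div_lt_iff₀ hs0pos).mp hi1
  have hi2' : A < C * s0 := (div_lt_iff₀ hs0pos).mp hi2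
  nlinarith [mul_lt_mul_of_pos_right hi1' hs0pos, hi2', hAB, hs0sq, hBpos, hCpos]
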